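/- Let T be a bounded linear operator on L² induced by a K⁰-kernel 𝐓 satisfying condition (iv), let {βₙ} be a complex sequence with βₙ → 0, and set λₙ(λ) = λ(1 − βₙλ)⁻¹. Then for each fixed λ ∈ ∇_s({βₙI + T̃ₙ}), sup_{(s,t)∈ℝ²} |𝐓_{n|λₙ(λ)}(s,t) − 𝐓_{|λ}(s,t)| → 0 as n → ∞ (the quantity being defined for all sufficiently large n). -/

import Mathlib

open MeasureTheory Filter Topology ContinuousLinearMap
open scoped ENNReal NNReal

noncomputable section

/-- `L²(ℝ)`, the complex Hilbert space of square-integrable functions on `ℝ`. -/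
abbrev L2 : Type := MeasureTheory.Lp ℂ 2 (MeasureTheory.volume : MeasureTheory.Measure ℝ)

/-- Bounded linear operators on `L²`. -/
abbrev L2op : Type := L2 →L[ℂ] L2

/-- `T` is the integral operator induced by the kernel `K`:
`(Tf)(s) = ∫ K(s,t) f(t) dt` for every `f ∈ L²` and almost every `s`. -/
def IsInducedBy (T : L2op) (K : ℝ → ℝ → ℂ) : Prop :=
  ∀ f : L2, ∀ᵐ s : ℝ, (T f : ℝ → ℂ) s = ∫ t : ℝ, K s t * (f : ℝ → ℂ) t

/-- `K` is a `K⁰`-kernel with associated Carleman functions `kt`, `kt'`: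
`kt s = conj (K s ·)` and `kt' s = K · s` as elements of `L²`, the kernel is
continuous and vanishes at infinity, and both Carleman functions are continuous
and vanish at infinity in `L²`-norm. -/
structure IsK0Kernel (K : ℝ → ℝ → ℂ) (kt kt' : ℝ → L2) : Prop where
  repr_t : ∀ s : ℝ, (kt s : ℝ → ℂ) =ᵐ[volume] fun x => (starRingEnd ℂ) (K s x)
  repr_t' : ∀ s : ℝ, (kt' s : ℝ → ℂ) =ᵐ[volume] fun x => K x s
  cont : Continuous fun p : ℝ × ℝ => K p.1 p.2
  vanish : Tendsto (fun p : ℝ × ℝ => K p.1 p.2) (cocompact (ℝ × ℝ)) (𝓝 0)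
  cont_t : Continuous kt
  vanish_t : Tendsto kt (cocompact ℝ) (𝓝 0)
  cont_t' : Continuous kt'
  vanish_t' : Tendsto kt' (cocompact ℝ) (𝓝 0)

/-- The set `Π(T)` of regular values of `T`: those `λ` for which `I - λT` is invertible. -/
def regularSet (T : L2op) : Set ℂ := {lam : ℂ | IsUnit (1 - lam • T)}

/-- The resolvent `R_λ(T) = (I - λT)⁻¹` (junk value `0` if `λ ∉ Π(T)`). -/
def res (T : L2op) (lam : ℂ) : L2op := Ring.inverse (1 - lam • T)

/-- The Fredholm resolvent `T_{|λ} = T R_λ(T)`. -/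
def fres (T : L2op) (lam : ℂ) : L2op := T * res T lam

/-- The region of boundedness `∇_b({Sₙ})`. -/
def nablaB (S : ℕ → L2op) : Set ℂ :=
  {ζ : ℂ | ζ ≠ 0 ∧ ∃ M : ℝ, 0 < M ∧ ∃ N : ℕ, ∀ n > N,
      ζ ∈ regularSet (S n) ∧ ‖fres (S n) ζ‖ ≤ M}

/-- The region of strong convergence `∇_s({Sₙ})`: the `ζ ∈ ∇_b({Sₙ})` such that
the Fredholm resolvents `S_{n|ζ}` converge in the strong operator topology. -/
def nablaS (S : ℕ → L2op) : Set ℂ :=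
  {ζ : ℂ | ζ ∈ nablaB S ∧
    ∀ f : L2, ∃ g : L2, Tendsto (fun n => fres (S n) ζ f) atTop (𝓝 g)}

/-- Nuclear (trace class) operator on `L²`. -/
def IsNuclear (T : L2op) : Prop :=
  ∃ g h : ℕ → L2, Summable (fun k => ‖g k‖ * ‖h k‖) ∧
    ∀ f : L2, T f = ∑' k : ℕ, (inner ℂ f (g k) : ℂ) • h k

/-- The characteristic function `χ` of the interval `(-τ, τ)`, with complex values. -/
def chi (t : ℝ) (x : ℝ) : ℂ := Set.indicator (Set.Ioo (-t) t) 1 x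

/-- Condition (iv) for a `K⁰`-kernel `K` inducing `T`: the positive reals `τ n`
strictly increase to `+∞`, `P n` is the orthogonal projection given by multiplication
by `χₙ = chi (τ n)`, the subkernels `Kₙ(s,t) = χₙ(s)K(s,t)` and
`K̃ₙ(s,t) = χₙ(s)K(s,t)χₙ(t)` are `K⁰`-kernels, and the induced operators
`Tₙ = PₙT` and `T̃ₙ = PₙTPₙ` are nuclear. -/
structure ConditionIV (K : ℝ → ℝ → ℂ) (T : L2op) (tau : ℕ → ℝ) (P : ℕ → L2op) : Prop where
  pos : ∀ n, 0 < tau n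
  mono : StrictMono tau
  tendsto_top : Tendsto tau atTop atTop
  proj : ∀ n, ∀ f : L2, (P n f : ℝ → ℂ) =ᵐ[volume] fun x => chi (tau n) x * (f : ℝ → ℂ) x
  subker : ∀ n, ∃ kt kt' : ℝ → L2, IsK0Kernel (fun s t => chi (tau n) s * K s t) kt kt'
  subker' : ∀ n, ∃ kt kt' : ℝ → L2,
      IsK0Kernel (fun s t => chi (tau n) s * K s t * chi (tau n) t) kt kt'
  nuclear : ∀ n, IsNuclear (P n * T)
  nuclear' : ∀ n, IsNuclear (P n * T * P n)

/-- `λₙ(λ) = λ(1 - βₙλ)⁻¹`. -/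
def lamn (b : ℕ → ℂ) (lam : ℂ) (n : ℕ) : ℂ := lam * (1 - b n * lam)⁻¹

/-- The resolvent kernel for `K` at `λ` built from the resolvent Carleman function
`𝐭'_{|λ}(t) = R_λ(T)(kt' t)`:  `𝐓_{|λ}(s,t) = λ⟨𝐭'_{|λ}(t), 𝐭(s)⟩ + 𝐓(s,t)`
(the paper's inner product `⟨a,b⟩ = ∫ a conj b` is `inner b a` in Mathlib). -/
def resKer (T : L2op) (K : ℝ → ℝ → ℂ) (kt kt' : ℝ → L2) (lam : ℂ) (s t : ℝ) : ℂ :=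
  lam * (inner ℂ (kt s) (res T lam (kt' t)) : ℂ) + K s t

/-- The resolvent kernel for the subkernel `Kₙ` at `λ`:
`𝐓_{n|λ}(s,t) = λ χₙ(s) ⟨𝐭'_{n|λ}(t), 𝐭(s)⟩ + 𝐓ₙ(s,t)`, where
`𝐭'_{n|λ}(t) = R_λ(Tₙ) Pₙ (kt' t)` and `𝐓ₙ(s,t) = χₙ(s) 𝐓(s,t)`. -/
def resKerN (T : L2op) (K : ℝ → ℝ → ℂ) (kt kt' : ℝ → L2) (taun : ℝ) (Pn : L2op)
    (lam : ℂ) (s t : ℝ) : ℂ :=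
  lam * chi taun s * (inner ℂ (kt s) (res (Pn * T) lam (Pn (kt' t))) : ℂ) + chi taun s * K s t

/-- `R` is a resolvent kernel for the `K⁰`-kernel `K` at `λ` (Definition 2 of the paper):
`R` is a `K⁰`-kernel satisfying the two simultaneous integral equations and the
square-integrability condition. -/
def IsResolventKernel (K : ℝ → ℝ → ℂ) (lam : ℂ) (R : ℝ → ℝ → ℂ) : Prop :=
  (∃ rt rt' : ℝ → L2, IsK0Kernel R rt rt') ∧
  (∀ s t : ℝ, R s t - lam * ∫ x : ℝ, K s x * R x t = K s t) ∧
  (∀ s t : ℝ, R s t - lam * ∫ x : ℝ, R s x * K x t = K s t) ∧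
  (∀ f : L2, ∫⁻ s : ℝ, ((‖∫ t : ℝ, R s t * (f : ℝ → ℂ) t‖₊ : ℝ≥0) : ℝ≥0∞) ^ 2 < ⊤)

lemma chi_eq_ite (t x : ℝ) : chi t x = if |x| < t then 1 else 0 := by
  simp only [chi, Set.indicator_apply, Set.mem_Ioo, Pi.one_apply, ← abs_lt]

lemma norm_chi_le (t x : ℝ) : ‖chi t x‖ ≤ 1 := by
  rw [chi_eq_ite]; split <;> simp

lemma chi_mul_self (t x : ℝ) : chi t x * chi t x = chi t x := by
  rw [chi_eq_ite]; split <;> simp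

lemma invEq {X Y : L2op} (h1 : X * Y = 1) (h2 : Y * X = 1) : Ring.inverse X = Y := by
  have : X = ((⟨X, Y, h1, h2⟩ : L2opˣ) : L2op) := rfl
  rw [this, Ring.inverse_unit]; rfl

lemma swapUnit {a b : L2op} (h : IsUnit (1 - a * b)) : IsUnit (1 - b * a) := by
  refine ⟨⟨1 - b * a, 1 + b * h.unit.inv * a, ?_, ?_⟩, rfl⟩
  · calc (1 - b * a) * (1 + b * (IsUnit.unit h).inv * a) =
        1 - b * a + b * ((1 - a * b) * h.unit.inv) * a := by noncomm_ring
      _ = 1 := by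
        simp only [Units.inv_eq_val_inv, IsUnit.mul_val_inv, mul_one, sub_add_cancel]
  · calc (1 + b * (IsUnit.unit h).inv * a) * (1 - b * a) =
        1 - b * a + b * (h.unit.inv * (1 - a * b)) * a := by noncomm_ring
      _ = 1 := by
        simp only [Units.inv_eq_val_inv, IsUnit.val_inv_mul, mul_one, sub_add_cancel]

lemma bdd_of_vanish {α β : Type*} [TopologicalSpace α] [SeminormedAddCommGroup β]
    {k : α → β} (hk : Continuous k) (hv : Tendsto k (cocompact α) (𝓝 0)) :
    ∃ C : ℝ, 0 ≤ C ∧ ∀ x, ‖k x‖ ≤ C := by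
  have hmem : k ⁻¹' Metric.closedBall 0 1 ∈ cocompact α :=
    hv (Metric.closedBall_mem_nhds 0 one_pos)
  obtain ⟨s, hs, hsub⟩ := Filter.mem_cocompact.mp hmem
  obtain ⟨C, hC⟩ := hs.exists_bound_of_continuousOn hk.continuousOn
  refine ⟨max C 1, le_trans zero_le_one (le_max_right _ _), fun x => ?_⟩
  by_cases hx : x ∈ s
  · exact (hC x hx).trans (le_max_left _ _)
  · have := hsub hx
    simp only [Set.mem_preimage, Metric.mem_closedBall, dist_zero_right] at this
    exact this.trans (le_max_right _ _)

lemma vanish_small {E β : Type*} [SeminormedAddCommGroup E] [SeminormedAddCommGroup β]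
    {k : E → β} (hv : Tendsto k (cocompact E) (𝓝 0)) {ε : ℝ} (hε : 0 < ε) :
    ∃ R : ℝ, ∀ x, R ≤ ‖x‖ → ‖k x‖ ≤ ε := by
  have hmem : k ⁻¹' Metric.closedBall 0 ε ∈ cocompact E :=
    hv (Metric.closedBall_mem_nhds 0 hε)
  obtain ⟨s, hs, hsub⟩ := Filter.mem_cocompact.mp hmem
  obtain ⟨R, hR⟩ := hs.isBounded.subset_closedBall 0
  refine ⟨R + 1, fun x hx => ?_⟩
  have hxs : x ∉ s := by
    intro hmem'
    have := hR hmem'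
    rw [Metric.mem_closedBall, dist_zero_right] at this
    linarith
  have := hsub hxs
  simpa only [Set.mem_preimage, Metric.mem_closedBall, dist_zero_right] using this

lemma tendsto_app {A : ℕ → L2op} {Aim : L2op} {CA : ℝ} {NA : ℕ}
    (hbd : ∀ n, NA < n → ‖A n‖ ≤ CA)
    (hA : ∀ y, Tendsto (fun n => A n y) atTop (𝓝 (Aim y)))
    {x : L2} {xs : ℕ → L2} (hx : Tendsto xs atTop (𝓝 x)) :
    Tendsto (fun n => A n (xs n)) atTop (𝓝 (Aim x)) := by
  rw [tendsto_iff_norm_sub_tendsto_zero]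
  have hseq : Tendsto (fun n => CA * ‖xs n - x‖ + ‖A n x - Aim x‖) atTop (𝓝 0) := by
    have h1 : Tendsto (fun n => ‖xs n - x‖) atTop (𝓝 0) :=
      tendsto_iff_norm_sub_tendsto_zero.mp hx
    have h2 : Tendsto (fun n => ‖A n x - Aim x‖) atTop (𝓝 0) :=
      tendsto_iff_norm_sub_tendsto_zero.mp (hA x)
    simpa using (h1.const_mul CA).add h2
  refine squeeze_zero' (Eventually.of_forall fun n => norm_nonneg _) ?_ hseq
  filter_upwards [eventually_gt_atTop NA] with n hn
  calc ‖A n (xs n) - Aim x‖ = ‖A n (xs n - x) + (A n x - Aim x)‖ := by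
        rw [map_sub, sub_add_sub_cancel]
      _ ≤ ‖A n (xs n - x)‖ + ‖A n x - Aim x‖ := norm_add_le _ _
      _ ≤ CA * ‖xs n - x‖ + ‖A n x - Aim x‖ := by
        gcongr
        exact ((A n).le_opNorm _).trans
          (mul_le_mul_of_nonneg_right (hbd n hn) (norm_nonneg _))

lemma unif {A : ℕ → L2op} {C : ℝ} {N : ℕ}
    (hbd : ∀ n, N < n → ‖A n‖ ≤ C)
    (hst : ∀ f : L2, Tendsto (fun n => A n f) atTop (𝓝 0))
    {k : ℝ → L2} (hk : Continuous k) (hkv : Tendsto k (cocompact ℝ) (𝓝 0))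
    {ε : ℝ} (hε : 0 < ε) : ∀ᶠ n in atTop, ∀ t, ‖A n (k t)‖ ≤ ε := by
  set δ : ℝ := ε / (2 * (C + 1) + 2) with hδ
  have hC0 : 0 ≤ C + 1 := by
    rcases (eventually_gt_atTop N).exists with ⟨n, hn⟩
    have := (norm_nonneg (A n)).trans (hbd n hn)
    linarith
  have hδpos : 0 < δ := by
    apply div_pos hε; linarith
  have hD : (0:ℝ) < 2 * (C + 1) + 2 := by linarith
  have hCδ : (C + 1) * δ ≤ ε / 2 := by
    rw [hδ, ← mul_div_assoc, div_le_div_iff₀ hD two_pos]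
    nlinarith
  have hmem : k ⁻¹' Metric.ball 0 δ ∈ cocompact ℝ := hkv (Metric.ball_mem_nhds 0 hδpos)
  obtain ⟨s, hs, hsub⟩ := Filter.mem_cocompact.mp hmem
  have hKc : IsCompact (k '' s) := hs.image hk
  obtain ⟨tt, htts, httfin, httcov⟩ := hKc.finite_cover_balls hδpos
  have hev : ∀ᶠ n in atTop, ∀ x ∈ tt, ‖A n x‖ < ε / 2 := by
    rw [eventually_all_finite httfin]
    intro x _
    have := (hst x).norm
    simp only [norm_zero] at this
    exact this.eventually_lt_const (by linarith)
  filter_upwards [hev, eventually_gt_atTop N] with n hn hN t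
  have hAn : ‖A n‖ ≤ C := hbd n hN
  by_cases hts : t ∈ s
  · obtain ⟨x, hxtt, hxball⟩ := Set.mem_iUnion₂.mp (httcov ⟨t, hts, rfl⟩)
    have hdist : ‖k t - x‖ < δ := by
      rw [Metric.mem_ball] at hxball
      simpa [dist_eq_norm] using hxball
    calc ‖A n (k t)‖ = ‖A n (k t - x) + A n x‖ := by rw [map_sub, sub_add_cancel]
      _ ≤ ‖A n (k t - x)‖ + ‖A n x‖ := norm_add_le _ _
      _ ≤ C * ‖k t - x‖ + ε / 2 := by
          gcongr
          · exact (A n).le_of_opNorm_le hAn _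
          · exact (hn x hxtt).le
      _ ≤ (C + 1) * δ + ε / 2 := by
          gcongr; nlinarith [norm_nonneg (k t - x)]
      _ ≤ ε / 2 + ε / 2 := by linarith
      _ = ε := by ring
  · have : ‖k t‖ < δ := by
      have := hsub hts
      simpa [dist_eq_norm] using this
    calc ‖A n (k t)‖ ≤ ‖A n‖ * ‖k t‖ := (A n).le_opNorm _
      _ ≤ (C + 1) * δ := by
          apply mul_le_mul (by linarith) this.le (norm_nonneg _) (by linarith)
      _ ≤ ε / 2 := hCδ
      _ ≤ ε := by linarith
lemma Pnorm {tau : ℝ} {Pn : L2op}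
    (hproj : ∀ f : L2, (Pn f : ℝ → ℂ) =ᵐ[volume] fun x => chi tau x * (f : ℝ → ℂ) x)
    (f : L2) : ‖Pn f‖ ≤ ‖f‖ := by
  calc ‖Pn f‖ = (eLpNorm (fun x => chi tau x * (f : ℝ → ℂ) x) 2 volume).toReal := by
        rw [Lp.norm_def, eLpNorm_congr_ae (hproj f)]
    _ ≤ (eLpNorm (f : ℝ → ℂ) 2 volume).toReal := by
        apply ENNReal.toReal_mono (Lp.eLpNorm_ne_top f)
        apply eLpNorm_mono
        intro x
        rw [norm_mul]
        exact mul_le_of_le_one_left (norm_nonneg _) (norm_chi_le _ _)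
    _ = ‖f‖ := (Lp.norm_def f).symm

lemma Pidem {tau : ℝ} {Pn : L2op}
    (hproj : ∀ f : L2, (Pn f : ℝ → ℂ) =ᵐ[volume] fun x => chi tau x * (f : ℝ → ℂ) x) :
    Pn * Pn = Pn := by
  ext f
  have key : (Pn (Pn f) : ℝ → ℂ) =ᵐ[volume] (Pn f : ℝ → ℂ) := by
    filter_upwards [hproj (Pn f), hproj f] with x h1 h2
    rw [h1, h2, ← mul_assoc, chi_mul_self, ← h2]
  exact key

lemma Ptend {tau : ℕ → ℝ} {P : ℕ → L2op} (htau : Tendsto tau atTop atTop)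
    (hproj : ∀ n, ∀ f : L2, (P n f : ℝ → ℂ) =ᵐ[volume] fun x => chi (tau n) x * (f : ℝ → ℂ) x)
    (f : L2) : Tendsto (fun n => P n f) atTop (𝓝 f) := by
  rw [tendsto_iff_norm_sub_tendsto_zero]
  have hae : ∀ n, (↑(P n f - f) : ℝ → ℂ) =ᵐ[volume]
      fun x => (chi (tau n) x - 1) * (f : ℝ → ℂ) x := by
    intro n
    filter_upwards [Lp.coeFn_sub (P n f) f, hproj n f] with x h1 h2
    rw [h1, Pi.sub_apply, h2]; ring
  have hnorm : ∀ n, ‖P n f - f‖ =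
      (eLpNorm (fun x => (chi (tau n) x - 1) * (f : ℝ → ℂ) x) 2 volume).toReal := by
    intro n; rw [Lp.norm_def, eLpNorm_congr_ae (hae n)]
  have hfm : AEMeasurable (f : ℝ → ℂ) volume := (Lp.aestronglyMeasurable f).aemeasurable
  have hchim : ∀ n, Measurable (fun x => chi (tau n) x - 1) := by
    intro n
    apply Measurable.sub _ measurable_const
    exact (measurable_const.indicator measurableSet_Ioo)
  have hlin : Tendsto
      (fun n => ∫⁻ x, (‖(chi (tau n) x - 1) * (f : ℝ → ℂ) x‖₊ : ℝ≥0∞) ^ (2:ℝ) ∂volume)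
      atTop (𝓝 0) := by
    have h0 : (0 : ℝ≥0∞) = ∫⁻ (_ : ℝ), 0 ∂volume := by simp
    rw [h0]
    apply tendsto_lintegral_of_dominated_convergence' (fun x => (‖(f : ℝ → ℂ) x‖₊ : ℝ≥0∞) ^ (2:ℝ))
    · intro n
      apply AEMeasurable.pow_const
      exact (((hchim n).aemeasurable.mul hfm).enorm)
    · intro n
      filter_upwards with x
      apply ENNReal.rpow_le_rpow _ (by norm_num)
      simp only [ENNReal.coe_le_coe, ← norm_toNNReal]
      apply Real.toNNReal_mono
      rw [norm_mul]
      apply mul_le_of_le_one_left (norm_nonneg _)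
      rw [chi_eq_ite]; split <;> simp
    · -- finiteness of the bound
      have hf2 : eLpNorm (f : ℝ → ℂ) 2 volume ≠ ⊤ := Lp.eLpNorm_ne_top f
      rw [eLpNorm_eq_lintegral_rpow_enorm_toReal (by norm_num) (by norm_num)] at hf2; simp only [enorm_eq_nnnorm] at hf2
      intro hcon
      rw [show ((2:ℝ≥0∞).toReal) = (2:ℝ) by norm_num] at hf2
      rw [hcon] at hf2
      simp [ENNReal.top_rpow_of_pos] at hf2
    · filter_upwards with x
      have hev : ∀ᶠ n in atTop, |x| < tau n := htau.eventually_gt_atTop |x|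
      apply Tendsto.congr' _ tendsto_const_nhds
      filter_upwards [hev] with n hn
      rw [chi_eq_ite, if_pos hn]
      simp
  have : Tendsto (fun n =>
      (eLpNorm (fun x => (chi (tau n) x - 1) * (f : ℝ → ℂ) x) 2 volume)) atTop (𝓝 0) := by
    have hrw : ∀ n, eLpNorm (fun x => (chi (tau n) x - 1) * (f : ℝ → ℂ) x) 2 volume =
        (∫⁻ x, (‖(chi (tau n) x - 1) * (f : ℝ → ℂ) x‖₊ : ℝ≥0∞) ^ (2:ℝ) ∂volume) ^ (1/(2:ℝ)) := by
      intro n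
      rw [eLpNorm_eq_lintegral_rpow_enorm_toReal (by norm_num) (by norm_num)]
      simp only [enorm_eq_nnnorm]
      norm_num
    simp only [hrw]
    have hc : Tendsto (fun y : ℝ≥0∞ => y ^ (1/(2:ℝ))) (𝓝 0) (𝓝 (0 ^ (1/(2:ℝ)))) :=
      ENNReal.continuous_rpow_const.tendsto 0
    rw [ENNReal.zero_rpow_of_pos (by norm_num)] at hc
    exact hc.comp hlin
  have := (ENNReal.tendsto_toReal (by simp)).comp this
  simp only [ENNReal.toReal_zero, Function.comp_def] at this
  exact Tendsto.congr (fun n => (hnorm n).symm) this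
set_option maxHeartbeats 2000000 in
theorem statement7 (T : L2op) (K : ℝ → ℝ → ℂ) (kt kt' : ℝ → L2)
    (hK : IsK0Kernel K kt kt') (hT : IsInducedBy T K)
    (tau : ℕ → ℝ) (P : ℕ → L2op) (hiv : ConditionIV K T tau P)
    (b : ℕ → ℂ) (hb : Tendsto b atTop (𝓝 (0 : ℂ)))
    (lam : ℂ) (hlam : lam ∈ nablaS (fun n => b n • (1 : L2op) + P n * T * P n)) :
    (∀ᶠ n in atTop, lamn b lam n ∈ regularSet (P n * T)) ∧
    Tendsto (fun n => ⨆ p : ℝ × ℝ,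
        ‖resKerN T K kt kt' (tau n) (P n) (lamn b lam n) p.1 p.2
          - resKer T K kt kt' lam p.1 p.2‖)
      atTop (𝓝 (0 : ℝ)) := by
  set S : ℕ → L2op := fun n => b n • (1 : L2op) + P n * T * P n with hSdef
  obtain ⟨⟨hlam0, M, hMpos, N, hMN⟩, hconv⟩ := hlam
  have hproj := hiv.proj
  have hPn : ∀ n (f : L2), ‖P n f‖ ≤ ‖f‖ := fun n => Pnorm (hproj n)
  have hPP : ∀ n, P n * P n = P n := fun n => Pidem (hproj n)
  have hPt : ∀ f : L2, Tendsto (fun n => P n f) atTop (𝓝 f) := Ptend hiv.tendsto_top hproj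
  -- core algebraic facts for good n
  have core : ∀ n, N < n → ‖b n * lam‖ < 1/2 →
      IsUnit (1 - lamn b lam n • (P n * T)) ∧
      res (P n * T) (lamn b lam n) * P n = P n * res (P n * T * P n) (lamn b lam n) ∧
      lamn b lam n • res (P n * T * P n) (lamn b lam n)
        = lam • (1 : L2op) + (lam * lam) • fres (S n) lam := by
    intro n hn hbn
    have hSu : IsUnit (1 - lam • S n) := (hMN n hn).1
    have hb1 : (1 : ℂ) - b n * lam ≠ 0 := by
      intro h
      rw [sub_eq_zero] at h
      rw [← h] at hbn
      norm_num at hbn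
    have hcan : lamn b lam n * (1 - b n * lam) = lam := by
      rw [lamn]
      rw [mul_assoc, inv_mul_cancel₀ hb1, mul_one]
    have hfac : (1 : L2op) - lam • S n
        = (1 - b n * lam) • (1 - lamn b lam n • (P n * T * P n)) := by
      rw [hSdef]
      simp only [smul_sub, smul_smul, smul_add, sub_smul, one_smul]
      rw [mul_comm (1 - b n * lam) (lamn b lam n), hcan, mul_comm lam (b n)]
      abel
    have hXu : IsUnit (1 - lamn b lam n • (P n * T * P n)) := by
      have h1 : IsUnit ((1 - b n * lam) • ((1:L2op) - lamn b lam n • (P n * T * P n))) := by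
        rw [← hfac]; exact hSu
      have hu : IsUnit ((1 - b n * lam) • (1 : L2op)) := by
        rw [← Algebra.algebraMap_eq_smul_one]
        exact (isUnit_iff_ne_zero.mpr hb1).map (algebraMap ℂ L2op)
      have h2 : ((1 - b n * lam) • (1 : L2op)) * ((1:L2op) - lamn b lam n • (P n * T * P n))
          = (1 - b n * lam) • ((1:L2op) - lamn b lam n • (P n * T * P n)) := by
        rw [smul_mul_assoc, one_mul]
      rw [← h2] at h1
      rw [show ((1 - b n * lam) • (1 : L2op)) = (hu.unit : L2op) from hu.unit_spec.symm] at h1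
      exact (hu.unit.isUnit_units_mul _).mp h1
    have hTnu : IsUnit (1 - lamn b lam n • (P n * T)) := by
      have h1 : (1:L2op) - lamn b lam n • (P n * T * P n)
          = 1 - (lamn b lam n • (P n * T)) * P n := by rw [smul_mul_assoc]
      rw [h1] at hXu
      have hsw := swapUnit hXu
      rwa [mul_smul_comm, ← mul_assoc, hPP n] at hsw
    have hRS : res (P n * T * P n) (lamn b lam n) = (1 - b n * lam) • res (S n) lam := by
      apply invEq
      · rw [mul_smul_comm, ← smul_mul_assoc, ← hfac]
        exact Ring.mul_inverse_cancel _ hSu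
      · rw [smul_mul_assoc, ← mul_smul_comm, ← hfac]
        exact Ring.inverse_mul_cancel _ hSu
    have hcomm : P n * ((1:L2op) - lamn b lam n • (P n * T * P n))
        = ((1:L2op) - lamn b lam n • (P n * T)) * P n := by
      rw [mul_sub, sub_mul, mul_one, one_mul, mul_smul_comm, smul_mul_assoc]
      congr 2
      rw [← mul_assoc, ← mul_assoc, hPP n]
    have hkey : res (P n * T) (lamn b lam n) * P n
        = P n * res (P n * T * P n) (lamn b lam n) := by
      have h := congrArg
        (fun Y => res (P n * T) (lamn b lam n) * Y * res (P n * T * P n) (lamn b lam n)) hcomm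
      rw [← mul_assoc] at h
      rw [mul_assoc (res (P n * T) (lamn b lam n) * P n)] at h
      rw [show ((1:L2op) - lamn b lam n • (P n * T * P n))
            * res (P n * T * P n) (lamn b lam n) = 1 from Ring.mul_inverse_cancel _ hXu] at h
      rw [mul_one] at h
      rw [← mul_assoc (res (P n * T) (lamn b lam n))] at h
      rw [show res (P n * T) (lamn b lam n) * ((1:L2op) - lamn b lam n • (P n * T)) = 1 from
        Ring.inverse_mul_cancel _ hTnu, one_mul] at h
      exact h
    have hres1 : res (S n) lam = 1 + lam • fres (S n) lam := by
      have h := Ring.mul_inverse_cancel _ hSu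
      rw [sub_mul, one_mul, smul_mul_assoc] at h
      exact eq_add_of_sub_eq h
    refine ⟨hTnu, hkey, ?_⟩
    rw [hRS, smul_smul, hcan, hres1, smul_add, smul_smul]
  have hres1gen : ∀ n, N < n → res (S n) lam = 1 + lam • fres (S n) lam := by
    intro n hn
    have h := Ring.mul_inverse_cancel _ ((hMN n hn).1 : IsUnit _)
    rw [sub_mul, one_mul, smul_mul_assoc] at h
    exact eq_add_of_sub_eq h
  have hblam : ∀ᶠ n in atTop, ‖b n * lam‖ < 1/2 := by
    have h := (hb.mul_const lam).norm
    rw [zero_mul, norm_zero] at h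
    exact h.eventually_lt_const (by norm_num)
  have hPop : ∀ n, ‖P n‖ ≤ 1 := fun n =>
    ContinuousLinearMap.opNorm_le_bound _ zero_le_one (by simpa using hPn n)
  have hSstrong : ∀ f : L2, Tendsto (fun n => S n f) atTop (𝓝 (T f)) := by
    intro f
    have h1 : Tendsto (fun n => b n • f) atTop (𝓝 (0 : L2)) := by
      have := hb.smul_const f
      rwa [zero_smul] at this
    have h2 : Tendsto (fun n => P n (T (P n f))) atTop (𝓝 (T f)) := by
      have := tendsto_app (A := P) (Aim := 1) (CA := 1) (NA := 0) (fun n _ => hPop n)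
        (fun y => by simpa using hPt y) ((T.continuous.tendsto _).comp (hPt f))
      simpa using this
    have h3 := h1.add h2
    rw [zero_add] at h3
    refine h3.congr fun n => ?_
    simp [hSdef, ContinuousLinearMap.add_apply, ContinuousLinearMap.smul_apply,
      ContinuousLinearMap.one_apply, ContinuousLinearMap.mul_apply]
  have hSbd : ∃ N2 : ℕ, ∀ n, N2 < n → ‖S n‖ ≤ ‖T‖ + 1 := by
    have hb1 : ∀ᶠ n in atTop, ‖b n‖ < 1 := by
      have h := hb.norm
      rw [norm_zero] at h
      exact h.eventually_lt_const one_pos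
    have : ∀ᶠ n in atTop, ‖S n‖ ≤ ‖T‖ + 1 := by
      filter_upwards [hb1] with n hn
      refine ContinuousLinearMap.opNorm_le_bound _ (by positivity) fun f => ?_
      have e1 : S n f = b n • f + P n (T (P n f)) := by
        simp [hSdef, ContinuousLinearMap.add_apply, ContinuousLinearMap.smul_apply,
          ContinuousLinearMap.one_apply, ContinuousLinearMap.mul_apply]
      rw [e1]
      have e2 : ‖P n (T (P n f))‖ ≤ ‖T‖ * ‖f‖ :=
        (hPn n _).trans ((T.le_opNorm _).trans
          (mul_le_mul_of_nonneg_left (hPn n f) (norm_nonneg T)))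
      have e3 : ‖b n • f‖ ≤ 1 * ‖f‖ := by
        rw [norm_smul]
        exact mul_le_mul_of_nonneg_right hn.le (norm_nonneg f)
      calc ‖b n • f + P n (T (P n f))‖ ≤ ‖b n • f‖ + ‖P n (T (P n f))‖ := norm_add_le _ _
        _ ≤ 1 * ‖f‖ + ‖T‖ * ‖f‖ := add_le_add e3 e2
        _ = (‖T‖ + 1) * ‖f‖ := by ring
    rw [Filter.eventually_atTop] at this
    obtain ⟨N2, hN2⟩ := this
    exact ⟨N2, fun n hn => hN2 n hn.le⟩
  obtain ⟨N2, hN2⟩ := hSbd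
  choose Wf hWf using hconv
  have hWadd : ∀ f g : L2, Wf (f + g) = Wf f + Wf g := by
    intro f g
    refine tendsto_nhds_unique (hWf (f + g)) ?_
    have := (hWf f).add (hWf g)
    refine this.congr fun n => ?_
    rw [← map_add]

  have hWsmul : ∀ (c : ℂ) (f : L2), Wf (c • f) = c • Wf f := by
    intro c f
    refine tendsto_nhds_unique (hWf (c • f)) ?_
    have := (hWf f).const_smul c
    refine this.congr fun n => ?_
    rw [← _root_.map_smul]
  have hWbd : ∀ f, ‖Wf f‖ ≤ M * ‖f‖ := by
    intro f
    apply le_of_tendsto (hWf f).norm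
    filter_upwards [eventually_gt_atTop N] with n hn
    exact ((fres (S n) lam).le_opNorm f).trans
      (mul_le_mul_of_nonneg_right (hMN n hn).2 (norm_nonneg f))
  set Wc : L2op := LinearMap.mkContinuous
    { toFun := Wf, map_add' := hWadd, map_smul' := fun c f => hWsmul c f } M hWbd with hWcdef
  have hWcf : ∀ f, Wc f = Wf f := fun f => rfl
  set Rlim : L2op := 1 + lam • Wc with hRlimdef
  have hRlimapp : ∀ f, Rlim f = f + lam • Wc f := by
    intro f
    simp [hRlimdef, ContinuousLinearMap.add_apply, ContinuousLinearMap.smul_apply,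
      ContinuousLinearMap.one_apply]
  have hRn : ∀ f : L2, Tendsto (fun n => res (S n) lam f) atTop (𝓝 (Rlim f)) := by
    intro f
    have hev : (fun n => f + lam • fres (S n) lam f) =ᶠ[atTop]
        (fun n => res (S n) lam f) := by
      filter_upwards [eventually_gt_atTop N] with n hn
      rw [hres1gen n hn]
      simp [ContinuousLinearMap.add_apply, ContinuousLinearMap.smul_apply,
        ContinuousLinearMap.one_apply]
    have h2 : Tendsto (fun n => f + lam • fres (S n) lam f) atTop (𝓝 (f + lam • Wf f)) :=
      ((hWf f).const_smul lam).const_add f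
    rw [show f + lam • Wf f = Rlim f by rw [hRlimapp, hWcf]] at h2
    exact h2.congr' hev
  have hRbd : ∀ n, N < n → ‖res (S n) lam‖ ≤ 1 + ‖lam‖ * M := by
    intro n hn
    rw [hres1gen n hn]
    calc ‖(1 : L2op) + lam • fres (S n) lam‖ ≤ ‖(1:L2op)‖ + ‖lam • fres (S n) lam‖ :=
          norm_add_le _ _
      _ ≤ 1 + ‖lam‖ * M := by
          apply add_le_add
          · rw [ContinuousLinearMap.one_def]
            exact ContinuousLinearMap.norm_id_le
          · exact (norm_smul_le lam _).trans
              (mul_le_mul_of_nonneg_left (hMN n hn).2 (norm_nonneg lam))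
  have hmulL : ((1 : L2op) - lam • T) * Rlim = 1 := by
    refine ContinuousLinearMap.ext fun f => ?_
    have h1 : Tendsto (fun n => res (S n) lam f - lam • (S n (res (S n) lam f)))
        atTop (𝓝 (Rlim f - lam • (T (Rlim f)))) :=
      (hRn f).sub ((tendsto_app hN2 hSstrong (hRn f)).const_smul lam)
    have h2 : (fun n => res (S n) lam f - lam • (S n (res (S n) lam f))) =ᶠ[atTop]
        (fun _ => f) := by
      filter_upwards [eventually_gt_atTop N] with n hn
      have h := Ring.mul_inverse_cancel _ ((hMN n hn).1 : IsUnit _)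
      have h3 := congrArg (fun A : L2op => A f) h
      simpa [res, ContinuousLinearMap.mul_apply, ContinuousLinearMap.sub_apply,
        ContinuousLinearMap.smul_apply, ContinuousLinearMap.one_apply] using h3
    have h4 : Rlim f - lam • (T (Rlim f)) = f :=
      tendsto_nhds_unique (h1.congr' h2) tendsto_const_nhds
    simpa [ContinuousLinearMap.mul_apply, ContinuousLinearMap.sub_apply,
      ContinuousLinearMap.smul_apply, ContinuousLinearMap.one_apply] using h4
  have hmulR : Rlim * ((1 : L2op) - lam • T) = 1 := by
    refine ContinuousLinearMap.ext fun f => ?_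
    have hxs : Tendsto (fun n => f - lam • (S n f)) atTop (𝓝 (f - lam • T f)) :=
      tendsto_const_nhds.sub ((hSstrong f).const_smul lam)
    have h1 : Tendsto (fun n => res (S n) lam (f - lam • (S n f))) atTop
        (𝓝 (Rlim (f - lam • T f))) := tendsto_app hRbd hRn hxs
    have h2 : (fun n => res (S n) lam (f - lam • (S n f))) =ᶠ[atTop] (fun _ => f) := by
      filter_upwards [eventually_gt_atTop N] with n hn
      have h := Ring.inverse_mul_cancel _ ((hMN n hn).1 : IsUnit _)
      have h3 := congrArg (fun A : L2op => A f) h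
      simpa [res, ContinuousLinearMap.mul_apply, ContinuousLinearMap.sub_apply,
        ContinuousLinearMap.smul_apply, ContinuousLinearMap.one_apply] using h3
    have h4 : Rlim (f - lam • T f) = f :=
      tendsto_nhds_unique (h1.congr' h2) tendsto_const_nhds
    simpa [ContinuousLinearMap.mul_apply, ContinuousLinearMap.sub_apply,
      ContinuousLinearMap.smul_apply, ContinuousLinearMap.one_apply] using h4
  have hTu : IsUnit ((1:L2op) - lam • T) := ⟨⟨_, Rlim, hmulL, hmulR⟩, rfl⟩
  have hresT : res T lam = Rlim := invEq hmulL hmulR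
  have hW : ∀ f : L2, Tendsto (fun n => fres (S n) lam f) atTop (𝓝 (fres T lam f)) := by
    intro f
    have hlim : Tendsto (fun n => S n (res (S n) lam f)) atTop (𝓝 (T (Rlim f))) :=
      tendsto_app hN2 hSstrong (hRn f)
    have h2 : fres T lam f = T (Rlim f) := by
      rw [fres, hresT]; rfl
    rw [h2]
    exact hlim.congr fun n => rfl
  -- constants
  obtain ⟨Ckt, hCkt0, hCkt⟩ := bdd_of_vanish hK.cont_t hK.vanish_t
  obtain ⟨Ckt', hCkt'0, hCkt'⟩ := bdd_of_vanish hK.cont_t' hK.vanish_t'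
  set Op : L2op := lam • (1:L2op) + (lam * lam) • fres T lam with hOpdef
  set u : ℝ → L2 := fun t => Op (kt' t) with hudef
  have hucont : Continuous u := Op.continuous.comp hK.cont_t'
  have huvan : Tendsto u (cocompact ℝ) (𝓝 0) := by
    have := (Op.continuous.tendsto 0).comp hK.vanish_t'
    rw [map_zero] at this
    simpa [Function.comp_def, hudef] using this
  have hubd : ∀ t, ‖u t‖ ≤ ‖Op‖ * Ckt' := fun t =>
    (Op.le_opNorm _).trans (mul_le_mul_of_nonneg_left (hCkt' t) (norm_nonneg _))
  have hres1T : res T lam = 1 + lam • fres T lam := by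
    have h := Ring.mul_inverse_cancel _ hTu
    rw [sub_mul, one_mul, smul_mul_assoc] at h
    exact eq_add_of_sub_eq h
  have hOpT : lam • res T lam = Op := by
    rw [hres1T, smul_add, smul_smul, hOpdef]
  -- kernel difference identity for good n
  have kernelEq : ∀ n, N < n → ‖b n * lam‖ < 1/2 → ∀ s t : ℝ,
      resKerN T K kt kt' (tau n) (P n) (lamn b lam n) s t - resKer T K kt kt' lam s t
        = chi (tau n) s *
            (inner ℂ (kt s) (P n ((lam • (1:L2op) + (lam*lam) • fres (S n) lam) (kt' t)) - u t) : ℂ)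
          + (chi (tau n) s - 1) * ((inner ℂ (kt s) (u t) : ℂ) + K s t) := by
    intro n hn hbn s t
    obtain ⟨hTnu, hkey, hOpn⟩ := core n hn hbn
    have e1 : res (P n * T) (lamn b lam n) (P n (kt' t))
        = P n (res (P n * T * P n) (lamn b lam n) (kt' t)) := by
      have := congrArg (fun A : L2op => A (kt' t)) hkey
      simpa [ContinuousLinearMap.mul_apply] using this
    have e2 : lamn b lam n • (res (P n * T * P n) (lamn b lam n) (kt' t))
        = (lam • (1:L2op) + (lam*lam) • fres (S n) lam) (kt' t) := by
      have := congrArg (fun A : L2op => A (kt' t)) hOpn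
      simpa [ContinuousLinearMap.smul_apply] using this
    have e3 : P n ((lam • (1:L2op) + (lam*lam) • fres (S n) lam) (kt' t))
        = lamn b lam n • (P n) (res (P n * T * P n) (lamn b lam n) (kt' t)) := by
      rw [← e2, _root_.map_smul]
    have e4 : u t = lam • (res T lam (kt' t)) := by
      rw [show u t = Op (kt' t) from rfl, ← hOpT, ContinuousLinearMap.smul_apply]
    rw [resKerN, resKer, e1, e3, e4, inner_sub_right]
    simp only [inner_smul_right]
    ring
  -- second conjunct events and final estimate
  refine ⟨?_, ?_⟩
  · filter_upwards [eventually_gt_atTop N, hblam] with n h1 h2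
    exact (core n h1 h2).1
  rw [NormedAddCommGroup.tendsto_nhds_zero]
  intro ε hε
  have hA1 : ∀ᶠ n in atTop, ∀ t,
      ‖(fres (S n) lam - fres T lam) (kt' t)‖ ≤ ε / (8*(Ckt+1)*(‖lam‖^2+1)) := by
    refine unif (A := fun n => fres (S n) lam - fres T lam) (C := M + ‖fres T lam‖) (N := N)
      (fun n hn => (norm_sub_le _ _).trans (add_le_add_left (hMN n hn).2 _))
      (fun f => ?_) hK.cont_t' hK.vanish_t' (by positivity)
    simpa [ContinuousLinearMap.sub_apply, sub_self] using
      ((hW f).sub (tendsto_const_nhds (x := fres T lam f)))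
  have hA2 : ∀ᶠ n in atTop, ∀ t, ‖(P n - 1) (u t)‖ ≤ ε / (8*(Ckt+1)) := by
    refine unif (A := fun n => P n - 1) (C := 2) (N := 0)
      (fun n _ => (norm_sub_le _ _).trans ?_)
      (fun f => ?_) hucont huvan (by positivity)
    · have h1 : ‖(1:L2op)‖ ≤ 1 := by
        rw [ContinuousLinearMap.one_def]; exact ContinuousLinearMap.norm_id_le
      linarith [hPop n]
    · simpa [ContinuousLinearMap.sub_apply, ContinuousLinearMap.one_apply, sub_self] using
        ((hPt f).sub (tendsto_const_nhds (x := f)))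
  obtain ⟨R1, hR1⟩ := vanish_small hK.vanish_t
    (show 0 < ε / (4*(‖Op‖*Ckt'+1)) by positivity)
  obtain ⟨R2, hR2⟩ := vanish_small hK.vanish (show 0 < ε/4 by positivity)
  have hτ : ∀ᶠ n in atTop, max R1 R2 ≤ tau n := hiv.tendsto_top.eventually_ge_atTop _
  filter_upwards [eventually_gt_atTop N, hblam, hA1, hA2, hτ] with n hn hbn h1 h2 hτn
  have hbound : ∀ s t : ℝ,
      ‖resKerN T K kt kt' (tau n) (P n) (lamn b lam n) s t - resKer T K kt kt' lam s t‖
        ≤ ε/2 := by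
    intro s t
    rw [kernelEq n hn hbn s t]
    by_cases hcase : |s| < tau n
    · rw [chi_eq_ite, if_pos hcase]
      simp only [one_mul, sub_self, zero_mul, add_zero]
      refine le_trans (norm_inner_le_norm _ _) ?_
      have hv : P n ((lam • (1:L2op) + (lam*lam) • fres (S n) lam) (kt' t)) - u t
          = P n (((lam*lam) • (fres (S n) lam - fres T lam)) (kt' t)) + ((P n - 1) (u t)) := by
        simp only [hudef, hOpdef, ContinuousLinearMap.add_apply, ContinuousLinearMap.smul_apply,
          ContinuousLinearMap.sub_apply, ContinuousLinearMap.one_apply, map_add, map_sub,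
          _root_.map_smul, smul_sub]
        abel
      rw [hv]
      have hXn : ‖P n (((lam*lam) • (fres (S n) lam - fres T lam)) (kt' t))‖
          ≤ ‖lam‖^2 * (ε / (8*(Ckt+1)*(‖lam‖^2+1))) := by
        refine (hPn n _).trans ?_
        rw [ContinuousLinearMap.smul_apply, norm_smul, norm_mul, ← sq]
        exact mul_le_mul_of_nonneg_left (h1 t) (by positivity)
      have hsum : ‖P n (((lam*lam) • (fres (S n) lam - fres T lam)) (kt' t)) + (P n - 1) (u t)‖
          ≤ ‖lam‖^2 * (ε / (8*(Ckt+1)*(‖lam‖^2+1))) + ε / (8*(Ckt+1)) :=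
        (norm_add_le _ _).trans (add_le_add hXn (h2 t))
      have hmain : ‖kt s‖ * ‖P n (((lam*lam) • (fres (S n) lam - fres T lam)) (kt' t))
          + (P n - 1) (u t)‖
          ≤ Ckt * (‖lam‖^2 * (ε / (8*(Ckt+1)*(‖lam‖^2+1))) + ε / (8*(Ckt+1))) :=
        mul_le_mul (hCkt s) hsum (norm_nonneg _) hCkt0
      refine hmain.trans ?_
      set L := ‖lam‖^2 with hL
      have hL0 : 0 ≤ L := by positivity
      have hstep1 : L * (ε / (8*(Ckt+1)*(L+1))) ≤ ε / (8*(Ckt+1)) := by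
        rw [← mul_div_assoc, div_le_div_iff₀ (by positivity) (by positivity)]
        nlinarith
      have hstep2 : Ckt * (ε / (8*(Ckt+1)) + ε / (8*(Ckt+1))) ≤ ε/2 := by
        rw [← add_div, ← mul_div_assoc, div_le_div_iff₀ (by positivity) (by norm_num : (0:ℝ) < 2)]
        nlinarith
      calc Ckt * (L * (ε / (8*(Ckt+1)*(L+1))) + ε / (8*(Ckt+1)))
          ≤ Ckt * (ε / (8*(Ckt+1)) + ε / (8*(Ckt+1))) := by
            apply mul_le_mul_of_nonneg_left _ hCkt0
            exact add_le_add_left hstep1 _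
        _ ≤ ε/2 := hstep2
    · push_neg at hcase
      rw [chi_eq_ite, if_neg (not_lt.mpr hcase)]
      simp only [zero_mul, zero_add, zero_sub, neg_mul, one_mul, norm_neg]
      have hs1 : ‖kt s‖ ≤ ε / (4*(‖Op‖*Ckt'+1)) := by
        apply hR1 s
        rw [Real.norm_eq_abs]
        exact le_trans (le_trans (le_max_left R1 R2) hτn) hcase
      have hs2 : ‖K s t‖ ≤ ε/4 := by
        apply hR2 (s, t)
        calc R2 ≤ max R1 R2 := le_max_right _ _
          _ ≤ tau n := hτn
          _ ≤ |s| := hcase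
          _ = ‖(s, t).1‖ := (Real.norm_eq_abs s).symm
          _ ≤ ‖(s, t)‖ := norm_fst_le _
      have hinner : ‖(inner ℂ (kt s) (u t) : ℂ)‖ ≤ (ε / (4*(‖Op‖*Ckt'+1))) * (‖Op‖ * Ckt') :=
        (norm_inner_le_norm _ _).trans
          (mul_le_mul hs1 (hubd t) (norm_nonneg _) (by positivity))
      have hquarter : (ε / (4*(‖Op‖*Ckt'+1))) * (‖Op‖ * Ckt') ≤ ε/4 := by
        rw [div_mul_eq_mul_div, div_le_div_iff₀ (by positivity) (by norm_num : (0:ℝ) < 4)]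
        have h0 : 0 ≤ ‖Op‖ * Ckt' := by positivity
        nlinarith
      calc ‖(inner ℂ (kt s) (u t) : ℂ) + K s t‖ ≤ ‖(inner ℂ (kt s) (u t) : ℂ)‖ + ‖K s t‖ :=
            norm_add_le _ _
        _ ≤ ε/4 + ε/4 := add_le_add (hinner.trans hquarter) hs2
        _ = ε/2 := by ring
  have hbdd : BddAbove (Set.range fun p : ℝ × ℝ =>
      ‖resKerN T K kt kt' (tau n) (P n) (lamn b lam n) p.1 p.2
        - resKer T K kt kt' lam p.1 p.2‖) := by
    refine ⟨ε/2, ?_⟩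
    rintro x ⟨p, rfl⟩
    exact hbound p.1 p.2
  have hsup : (⨆ p : ℝ × ℝ,
      ‖resKerN T K kt kt' (tau n) (P n) (lamn b lam n) p.1 p.2
        - resKer T K kt kt' lam p.1 p.2‖) ≤ ε/2 :=
    ciSup_le fun p => hbound p.1 p.2
  have h0 : (0:ℝ) ≤ ⨆ p : ℝ × ℝ,
      ‖resKerN T K kt kt' (tau n) (P n) (lamn b lam n) p.1 p.2
        - resKer T K kt kt' lam p.1 p.2‖ :=
    le_ciSup_of_le hbdd ((0:ℝ), (0:ℝ)) (norm_nonneg _)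
  rw [Real.norm_eq_abs, abs_of_nonneg h0]
  exact lt_of_le_of_lt hsup (by linarith)
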